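/- Let $q > 1/2$ be a real number. There exist constants $c_0, c_1 > 0$ depending only on $q$ such that for every Lebesgue-measurable set $E \subseteq \mathbb{R}^n$ with $0 < |E| < \infty$ and every nonnegative measurable function $g$ on $E$ with $g^{2q} \in L^1(E)$, one has $\fint_E \big|g^q - \big((g)_E\big)^q\big|^2 \,dx \;\le\; c_0 \fint_E \big|g^q - (g^q)_E\big|^2 \,dx \;\le\; c_1 \fint_E \big|g^q - \big((g)_E\big)^q\big|^2 \,dx$. -/

import Mathlib

open MeasureTheory


/-- Weighted AM-GM tangent line bound: `x ^ θ ≤ 1 + θ*(x-1)` for `θ ∈ [0,1]`. -/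
private lemma lemT {θ x : ℝ} (hθ0 : 0 ≤ θ) (hθ1 : θ ≤ 1) (hx : 0 ≤ x) :
    x ^ θ ≤ 1 + θ * (x - 1) := by
  have h := Real.geom_mean_le_arith_mean2_weighted hθ0
    (by linarith : (0:ℝ) ≤ 1 - θ) hx zero_le_one (by ring)
  simp only [Real.one_rpow, mul_one] at h
  linarith

/-- Quadratic lower bound for concave powers: `1 + s*(x-1) - (x-1)^2 ≤ x ^ s` for `s ∈ (0,1]`. -/
private lemma lemA {s x : ℝ} (hs0 : 0 < s) (hs1 : s ≤ 1) (hx : 0 ≤ x) :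
    1 + s * (x - 1) - (x - 1) ^ 2 ≤ x ^ s := by
  rcases eq_or_lt_of_le hx with h | hxpos
  · rw [← h, Real.zero_rpow hs0.ne']
    nlinarith
  · have hY : x ^ (1 - s) ≤ (1 - s) * x + s := by
      have h := Real.geom_mean_le_arith_mean2_weighted
        (by linarith : (0:ℝ) ≤ 1 - s) hs0.le hx zero_le_one (by ring)
      simpa [Real.one_rpow] using h
    have hXY : x ^ s * x ^ (1 - s) = x := by
      rw [← Real.rpow_add hxpos]; norm_num
    have hXpos : 0 < x ^ s := Real.rpow_pos_of_pos hxpos s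
    have hYpos : 0 < x ^ (1 - s) := Real.rpow_pos_of_pos hxpos _
    rcases le_or_gt (1 + s * (x - 1) - (x - 1) ^ 2) 0 with hf | hf
    · exact hf.trans hXpos.le
    · have key : (1 + s * (x - 1) - (x - 1) ^ 2) * x ^ (1 - s) ≤ x ^ s * x ^ (1 - s) := by
        rw [hXY]
        calc (1 + s * (x - 1) - (x - 1) ^ 2) * x ^ (1 - s)
            ≤ (1 + s * (x - 1) - (x - 1) ^ 2) * ((1 - s) * x + s) :=
              mul_le_mul_of_nonneg_left hY hf.le
          _ ≤ x := by
              nlinarith [mul_nonneg (sq_nonneg (x - 1))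
                (show (0:ℝ) ≤ s ^ 2 + (1 - s) * x by nlinarith)]
      exact le_of_mul_le_mul_right key hYpos

/-- Quadratic upper bound for powers `s ∈ [1,2]` : `x ^ s ≤ 1 + s*(x-1) + (x-1)^2`. -/
private lemma lemB {s x : ℝ} (hs1 : 1 ≤ s) (hs2 : s ≤ 2) (hx : 0 ≤ x) :
    x ^ s ≤ 1 + s * (x - 1) + (x - 1) ^ 2 := by
  rcases eq_or_lt_of_le hx with h | hxpos
  · rw [← h, Real.zero_rpow (by positivity : s ≠ 0)]
    nlinarith
  · have key : x ^ s ≤ (2 - s) * x + (s - 1) * x ^ 2 := by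
      have h := Real.geom_mean_le_arith_mean2_weighted
        (by linarith : (0:ℝ) ≤ 2 - s) (by linarith : (0:ℝ) ≤ s - 1) hx (sq_nonneg x)
        (by ring)
      calc x ^ s = x ^ (2 - s) * (x ^ 2) ^ (s - 1) := by
            rw [← Real.rpow_two, ← Real.rpow_mul hx, ← Real.rpow_add hxpos]
            congr 1; ring
        _ ≤ (2 - s) * x + (s - 1) * x ^ 2 := h
    nlinarith [mul_nonneg (show (0:ℝ) ≤ 2 - s by linarith) (sq_nonneg (x - 1))]

/-- `a^s - b^s ≤ (a-b)^s` for `0 ≤ b ≤ a`, `s ∈ (0,1]`. -/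
private lemma lemSub {s a b : ℝ} (hs0 : 0 < s) (hs1 : s ≤ 1) (hb : 0 ≤ b) (hab : b ≤ a) :
    a ^ s - b ^ s ≤ (a - b) ^ s := by
  have hc : 0 ≤ a - b := sub_nonneg.2 hab
  have key : a ^ s ≤ (a - b) ^ s + b ^ s := by
    have h := NNReal.rpow_add_le_add_rpow (⟨a - b, hc⟩ : NNReal) (⟨b, hb⟩ : NNReal) hs0.le hs1
    have h2 := NNReal.coe_le_coe.2 h
    push_cast [NNReal.coe_rpow] at h2
    change ((a - b) + b) ^ s ≤ (a - b) ^ s + b ^ s at h2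
    simpa [sub_add_cancel] using h2
  linarith

/-- Integrability of `w ^ θ` for `θ ∈ [0,1]`, `w` nonneg integrable, finite measure. -/
private lemma intRpow {α : Type} [MeasurableSpace α] {ν : Measure α}
    [IsFiniteMeasure ν] {w : α → ℝ} (hw : Measurable w) (hw0 : ∀ x, 0 ≤ w x)
    (hwi : Integrable w ν) {θ : ℝ} (hθ0 : 0 ≤ θ) (hθ1 : θ ≤ 1) :
    Integrable (fun x => w x ^ θ) ν := by
  refine ((integrable_const (1:ℝ)).add hwi).mono'
    (((Real.continuous_rpow_const hθ0).measurable.comp hw).aestronglyMeasurable) ?_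
  filter_upwards with x
  rw [Real.norm_eq_abs, abs_of_nonneg (Real.rpow_nonneg (hw0 x) θ)]
  rcases le_or_gt (w x) 1 with h | h
  · have := Real.rpow_le_one (hw0 x) h hθ0
    simp only [Pi.add_apply]
    linarith [hw0 x]
  · have h2 : w x ^ θ ≤ w x ^ (1:ℝ) := Real.rpow_le_rpow_of_exponent_le h.le hθ1
    rw [Real.rpow_one] at h2
    simp only [Pi.add_apply]
    linarith

/-- Jensen's inequality for concave power functions on a probability space. -/
private lemma lemJ {α : Type} [MeasurableSpace α] {ν : Measure α} [IsProbabilityMeasure ν]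
    {θ : ℝ} (hθ0 : 0 < θ) (hθ1 : θ ≤ 1) {w : α → ℝ} (hw : Measurable w)
    (hw0 : ∀ x, 0 ≤ w x) (hwi : Integrable w ν) :
    ∫ x, w x ^ θ ∂ν ≤ (∫ x, w x ∂ν) ^ θ := by
  have hwsi : Integrable (fun x => w x ^ θ) ν := intRpow hw hw0 hwi hθ0.le hθ1
  set a := ∫ x, w x ∂ν with ha
  have ha0 : 0 ≤ a := integral_nonneg hw0
  rcases eq_or_lt_of_le ha0 with h0 | hapos
  · have hw0' : w =ᵐ[ν] 0 :=
      (integral_eq_zero_iff_of_nonneg_ae (Filter.Eventually.of_forall hw0) hwi).1 h0.symm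
    have hθz : (fun x => w x ^ θ) =ᵐ[ν] 0 := by
      filter_upwards [hw0'] with x hx
      simp only [Pi.zero_apply] at hx ⊢
      rw [hx, Real.zero_rpow hθ0.ne']
    rw [integral_congr_ae hθz]
    simp [← h0, Real.zero_rpow hθ0.ne']
  · have hP : 0 < a ^ (θ - 1) := Real.rpow_pos_of_pos hapos _
    have hPQ : a ^ (θ - 1) * a ^ (1 - θ) = 1 := by
      rw [← Real.rpow_add hapos]; norm_num
    have haa : a ^ (θ - 1) * a = a ^ θ := by
      rw [Real.rpow_sub_one hapos.ne']; field_simp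
    have pw : ∀ x, w x ^ θ ≤ (1 - θ) * a ^ θ + θ * a ^ (θ - 1) * w x := by
      intro x
      have h := Real.geom_mean_le_arith_mean2_weighted hθ0.le
        (by linarith : (0:ℝ) ≤ 1 - θ) (hw0 x) ha0 (by ring)
      have h2 := mul_le_mul_of_nonneg_left h hP.le
      calc w x ^ θ = a ^ (θ - 1) * (w x ^ θ * a ^ (1 - θ)) := by
            rw [show a ^ (θ - 1) * (w x ^ θ * a ^ (1 - θ))
                = a ^ (θ - 1) * a ^ (1 - θ) * w x ^ θ by ring, hPQ, one_mul]
        _ ≤ a ^ (θ - 1) * (θ * w x + (1 - θ) * a) := h2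
        _ = (1 - θ) * (a ^ (θ - 1) * a) + θ * a ^ (θ - 1) * w x := by ring
        _ = (1 - θ) * a ^ θ + θ * a ^ (θ - 1) * w x := by rw [haa]
    calc ∫ x, w x ^ θ ∂ν
        ≤ ∫ x, ((1 - θ) * a ^ θ + θ * a ^ (θ - 1) * w x) ∂ν := by
          refine integral_mono hwsi ?_ pw
          exact (integrable_const _).add (hwi.const_mul _)
      _ = (1 - θ) * a ^ θ + θ * a ^ (θ - 1) * a := by
          rw [integral_add (integrable_const _) (hwi.const_mul _), integral_const,
            integral_const_mul]
          simp [measure_univ, ← ha]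
      _ = a ^ θ := by
          rw [show θ * a ^ (θ - 1) * a = θ * (a ^ (θ - 1) * a) by ring, haa]; ring

/-- Bias-variance expansion on a probability space. -/
private lemma expand {α : Type} [MeasurableSpace α] {ν : Measure α} [IsProbabilityMeasure ν]
    {u : α → ℝ} (hu : AEStronglyMeasurable u ν) (h2 : Integrable (fun x => u x ^ 2) ν)
    (c : ℝ) :
    ∫ x, (u x - c) ^ 2 ∂ν
      = (∫ x, (u x - ∫ y, u y ∂ν) ^ 2 ∂ν) + ((∫ x, u x ∂ν) - c) ^ 2 := by
  have hu1 : Integrable u ν := by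
    refine ((integrable_const (1:ℝ)).add h2).mono' hu ?_
    filter_upwards with x
    rw [Real.norm_eq_abs]
    simp only [Pi.add_apply]
    nlinarith [sq_nonneg (|u x| - 1), sq_abs (u x), abs_nonneg (u x)]
  have hexp : ∀ c : ℝ, ∫ x, (u x - c) ^ 2 ∂ν
      = ∫ x, u x ^ 2 ∂ν - 2 * c * ∫ x, u x ∂ν + c ^ 2 := by
    intro c
    have hfe : (fun x => (u x - c) ^ 2) = fun x => u x ^ 2 - 2 * c * u x + c ^ 2 :=
      funext fun x => by ring
    have i1 : Integrable (fun x => u x ^ 2 - 2 * c * u x) ν := by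
      have := h2.sub (hu1.const_mul (2 * c))
      exact this
    have i2 : Integrable (fun x => 2 * c * u x) ν := hu1.const_mul (2 * c)
    rw [hfe, integral_add i1 (integrable_const _), integral_sub h2 i2,
      integral_const_mul, integral_const]
    simp only [probReal_univ, one_smul]
  rw [hexp c, hexp (∫ y, u y ∂ν)]
  ring


set_option maxHeartbeats 1000000 in
private lemma key (q : ℝ) (hq : 1 / 2 < q) :
    ∃ C : ℝ, 1 ≤ C ∧ ∀ (α : Type) (_ : MeasurableSpace α) (ν : Measure α)
      (_ : IsProbabilityMeasure ν) (g : α → ℝ), Measurable g → (∀ x, 0 ≤ g x) →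
      Integrable (fun x => g x ^ (2 * q)) ν →
      ((∫ x, g x ^ q ∂ν) - (∫ x, g x ∂ν) ^ q) ^ 2 ≤
        C * ∫ x, (g x ^ q - ∫ y, g y ^ q ∂ν) ^ 2 ∂ν := by
  have hq0 : 0 < q := by linarith
  set s : ℝ := q⁻¹ with hs
  have hs0 : 0 < s := by rw [hs]; exact inv_pos.2 hq0
  have hqs : q * s = 1 := by rw [hs]; exact mul_inv_cancel₀ hq0.ne'
  have hs2 : s < 2 := by
    nlinarith [mul_pos (show (0:ℝ) < q - 1/2 by linarith) hs0]
  have hcancel : ∀ z : ℝ, 0 ≤ z → (z ^ s) ^ q = z := fun z hz => by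
    rw [hs]; exact Real.rpow_inv_rpow hz hq0.ne'
  rcases le_or_gt q 1 with hq1 | hq1
  case inl =>
    -- LOW CASE : 1/2 < q ≤ 1, constant C = 1
    have hs1 : 1 ≤ s := by nlinarith [mul_nonneg (sub_nonneg.2 hq1) hs0.le]
    refine ⟨1, le_refl 1, ?_⟩
    intro α mα ν hν g hg hg0 hgint
    haveI := hν
    have hu : Measurable fun x => g x ^ q :=
      (Real.continuous_rpow_const hq0.le).measurable.comp hg
    have hu0 : ∀ x, 0 ≤ g x ^ q := fun x => Real.rpow_nonneg (hg0 x) q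
    have h2 : Integrable (fun x => (g x ^ q) ^ 2) ν := by
      refine hgint.congr (Filter.Eventually.of_forall fun x => ?_)
      show g x ^ (2 * q) = (g x ^ q) ^ 2
      rw [show (2:ℝ) * q = q + q by ring,
        Real.rpow_add' (hg0 x) (by positivity : q + q ≠ 0), sq]
    have hu1 : Integrable (fun x => g x ^ q) ν := by
      refine ((integrable_const (1:ℝ)).add h2).mono' hu.aestronglyMeasurable ?_
      filter_upwards with x
      rw [Real.norm_eq_abs, abs_of_nonneg (hu0 x)]
      simp only [Pi.add_apply]
      nlinarith [sq_nonneg (g x ^ q - 1), hu0 x]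
    have hgi : Integrable g ν := by
      refine ((integrable_const (1:ℝ)).add hgint).mono' hg.aestronglyMeasurable ?_
      filter_upwards with x
      rw [Real.norm_eq_abs, abs_of_nonneg (hg0 x)]
      simp only [Pi.add_apply]
      rcases le_or_gt (g x) 1 with h | h
      · linarith [Real.rpow_nonneg (hg0 x) (2*q)]
      · have h2' : g x ^ (1:ℝ) ≤ g x ^ (2*q) :=
          Real.rpow_le_rpow_of_exponent_le h.le (by linarith)
        rw [Real.rpow_one] at h2'
        linarith
    have hgu : ∀ x, (g x ^ q) ^ s = g x := fun x => by
      rw [hs]; exact Real.rpow_rpow_inv (hg0 x) hq0.ne'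
    set ub := ∫ x, g x ^ q ∂ν with hub
    set m := ∫ x, g x ∂ν with hm
    have hub0 : 0 ≤ ub := by rw [hub]; exact integral_nonneg hu0
    have hm0 : 0 ≤ m := by rw [hm]; exact integral_nonneg hg0
    set k := m ^ q with hk
    set B := ∫ x, (g x ^ q - ub) ^ 2 ∂ν with hB
    have hB0 : 0 ≤ B := by rw [hB]; exact integral_nonneg fun x => sq_nonneg _
    clear_value s ub m k B
    -- Step 1 : ub ≤ k
    have hub_le_k : ub ≤ k := by
      rcases eq_or_lt_of_le hm0 with h0 | hmpos
      · have hmz : ∫ x, g x ∂ν = 0 := by rw [← hm, ← h0]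
        have hg0' : g =ᵐ[ν] 0 :=
          (integral_eq_zero_iff_of_nonneg_ae (Filter.Eventually.of_forall hg0) hgi).1 hmz
        have hu0' : (fun x => g x ^ q) =ᵐ[ν] (0 : α → ℝ) := by
          filter_upwards [hg0'] with x hx
          simp only [Pi.zero_apply] at hx ⊢
          rw [hx, Real.zero_rpow hq0.ne']
        have hub_eq : ub = 0 := by
          rw [hub, integral_congr_ae hu0']; simp
        have hk_eq : k = 0 := by rw [hk, ← h0, Real.zero_rpow hq0.ne']
        rw [hub_eq, hk_eq]
      · have hP : 0 < m ^ (q - 1) := Real.rpow_pos_of_pos hmpos _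
        have hPQ : m ^ (q - 1) * m ^ (1 - q) = 1 := by
          rw [← Real.rpow_add hmpos]; norm_num
        have haa : m ^ (q - 1) * m = m ^ q := by
          rw [Real.rpow_sub_one hmpos.ne']; field_simp
        have pw : ∀ x, g x ^ q ≤ (1 - q) * k + q * m ^ (q - 1) * g x := by
          intro x
          have h := Real.geom_mean_le_arith_mean2_weighted hq0.le
            (by linarith : (0:ℝ) ≤ 1 - q) (hg0 x) hm0 (by ring)
          have h2' := mul_le_mul_of_nonneg_left h hP.le
          calc g x ^ q = m ^ (q - 1) * (g x ^ q * m ^ (1 - q)) := by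
                rw [show m ^ (q - 1) * (g x ^ q * m ^ (1 - q))
                    = m ^ (q - 1) * m ^ (1 - q) * g x ^ q by ring, hPQ, one_mul]
            _ ≤ m ^ (q - 1) * (q * g x + (1 - q) * m) := h2'
            _ = (1 - q) * (m ^ (q - 1) * m) + q * m ^ (q - 1) * g x := by ring
            _ = (1 - q) * k + q * m ^ (q - 1) * g x := by rw [haa, ← hk]
        have hInt : ub ≤ (1 - q) * k + q * m ^ (q - 1) * m := by
          have h : (∫ x, g x ^ q ∂ν) ≤ ∫ x, ((1 - q) * k + q * m ^ (q - 1) * g x) ∂ν :=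
            integral_mono hu1
              ((integrable_const ((1 - q) * k)).add (hgi.const_mul (q * m ^ (q - 1)))) pw
          rwa [integral_add (integrable_const _) (hgi.const_mul _), integral_const,
            probReal_univ, one_smul, integral_const_mul, ← hm, ← hub] at h
        have he : q * m ^ (q - 1) * m = q * k := by
          rw [show q * m ^ (q - 1) * m = q * (m ^ (q - 1) * m) by ring, haa, ← hk]
        rw [he] at hInt
        linarith
    -- Step 2 : k ≤ ub + sqrt B
    have habnn : (0:ℝ) ≤ ub + Real.sqrt B := add_nonneg hub0 (Real.sqrt_nonneg B)
    have hk_le : k ≤ ub + Real.sqrt B := by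
      have hpw : ∀ x, ((g x ^ q) ^ 2) ^ (s/2) = g x := by
        intro x
        rw [← Real.rpow_two, ← Real.rpow_mul (hu0 x), show (2:ℝ) * (s/2) = s by ring]
        exact hgu x
      have hJ := lemJ (ν := ν) (half_pos hs0) (by linarith : s/2 ≤ 1)
        (hu.pow_const 2) (fun x => sq_nonneg _) h2
      have hmeq : ∫ x, ((g x ^ q) ^ 2) ^ (s/2) ∂ν = m := by
        rw [hm]; exact integral_congr_ae (Filter.Eventually.of_forall fun x => hpw x)
      have hI2 : ∫ x, (g x ^ q) ^ 2 ∂ν = B + ub ^ 2 := by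
        have e0 : ∫ x, (g x ^ q - 0) ^ 2 ∂ν
            = (∫ x, (g x ^ q - ∫ y, g y ^ q ∂ν) ^ 2 ∂ν) + ((∫ x, g x ^ q ∂ν) - 0) ^ 2 :=
          expand hu.aestronglyMeasurable h2 0
        rw [← hub, ← hB] at e0
        simpa using e0
      have hm_le : m ≤ (ub + Real.sqrt B) ^ s := by
        calc m = ∫ x, ((g x ^ q) ^ 2) ^ (s/2) ∂ν := hmeq.symm
          _ ≤ (∫ x, (g x ^ q) ^ 2 ∂ν) ^ (s/2) := hJ
          _ ≤ ((ub + Real.sqrt B) ^ 2) ^ (s/2) := by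
              apply Real.rpow_le_rpow (integral_nonneg fun x => sq_nonneg _) ?_ (by linarith)
              rw [hI2]
              nlinarith [Real.sq_sqrt hB0, Real.sqrt_nonneg B]
          _ = (ub + Real.sqrt B) ^ s := by
              rw [← Real.rpow_two, ← Real.rpow_mul habnn, show (2:ℝ) * (s/2) = s by ring]
      have h := Real.rpow_le_rpow hm0 hm_le hq0.le
      rw [hcancel _ habnn] at h
      rw [hk]; exact h
    have hd0 : 0 ≤ k - ub := sub_nonneg.2 hub_le_k
    have hd1 : k - ub ≤ Real.sqrt B := by linarith
    have hsq2 := pow_le_pow_left₀ hd0 hd1 2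
    rw [Real.sq_sqrt hB0] at hsq2
    show (ub - k) ^ 2 ≤ 1 * B
    nlinarith [hsq2]
  case inr =>
    -- HIGH CASE : q > 1
    have hs1 : s < 1 := by nlinarith [mul_pos (show (0:ℝ) < q - 1 by linarith) hs0]
    set η : ℝ := 1 - (1 - s/4) ^ s with hη
    have hη0 : 0 < η := by
      have : (1 - s/4) ^ s < 1 := Real.rpow_lt_one (by linarith) (by linarith) hs0
      rw [hη]; linarith
    have hη1 : η ≤ 1 := by
      have : 0 ≤ (1 - s/4) ^ s := Real.rpow_nonneg (by linarith) s
      rw [hη]; linarith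
    have hηq : 0 < η ^ (2*q) := Real.rpow_pos_of_pos hη0 _
    have hηq1 : η ^ (2*q) ≤ 1 := Real.rpow_le_one hη0.le hη1 (by linarith)
    have hCpos : 0 < (η ^ (2*q))⁻¹ := inv_pos.2 hηq
    have hC1 : 1 ≤ (η ^ (2*q))⁻¹ := by
      nlinarith [mul_inv_cancel₀ hηq.ne', mul_nonneg (sub_nonneg.2 hηq1) hCpos.le]
    refine ⟨(η ^ (2*q))⁻¹, hC1, ?_⟩
    intro α mα ν hν g hg hg0 hgint
    haveI := hν
    have hu : Measurable fun x => g x ^ q :=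
      (Real.continuous_rpow_const hq0.le).measurable.comp hg
    have hu0 : ∀ x, 0 ≤ g x ^ q := fun x => Real.rpow_nonneg (hg0 x) q
    have h2 : Integrable (fun x => (g x ^ q) ^ 2) ν := by
      refine hgint.congr (Filter.Eventually.of_forall fun x => ?_)
      show g x ^ (2 * q) = (g x ^ q) ^ 2
      rw [show (2:ℝ) * q = q + q by ring,
        Real.rpow_add' (hg0 x) (by positivity : q + q ≠ 0), sq]
    have hu1 : Integrable (fun x => g x ^ q) ν := by
      refine ((integrable_const (1:ℝ)).add h2).mono' hu.aestronglyMeasurable ?_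
      filter_upwards with x
      rw [Real.norm_eq_abs, abs_of_nonneg (hu0 x)]
      simp only [Pi.add_apply]
      nlinarith [sq_nonneg (g x ^ q - 1), hu0 x]
    have hgi : Integrable g ν := by
      refine ((integrable_const (1:ℝ)).add hgint).mono' hg.aestronglyMeasurable ?_
      filter_upwards with x
      rw [Real.norm_eq_abs, abs_of_nonneg (hg0 x)]
      simp only [Pi.add_apply]
      rcases le_or_gt (g x) 1 with h | h
      · linarith [Real.rpow_nonneg (hg0 x) (2*q)]
      · have h2' : g x ^ (1:ℝ) ≤ g x ^ (2*q) :=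
          Real.rpow_le_rpow_of_exponent_le h.le (by linarith)
        rw [Real.rpow_one] at h2'
        linarith
    have hgu : ∀ x, (g x ^ q) ^ s = g x := fun x => by
      rw [hs]; exact Real.rpow_rpow_inv (hg0 x) hq0.ne'
    set ub := ∫ x, g x ^ q ∂ν with hub
    set m := ∫ x, g x ∂ν with hm
    have hub0 : 0 ≤ ub := by rw [hub]; exact integral_nonneg hu0
    have hm0 : 0 ≤ m := by rw [hm]; exact integral_nonneg hg0
    set k := m ^ q with hk
    have hk0 : 0 ≤ k := by rw [hk]; exact Real.rpow_nonneg hm0 q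
    set B := ∫ x, (g x ^ q - ub) ^ 2 ∂ν with hB
    have hB0 : 0 ≤ B := by rw [hB]; exact integral_nonneg fun x => sq_nonneg _
    clear_value s η ub m k B
    have hsqint : ∀ c : ℝ, Integrable (fun x => (g x ^ q - c) ^ 2) ν := by
      intro c
      have hfe : (fun x => (g x ^ q - c) ^ 2)
          = fun x => (g x ^ q) ^ 2 - 2 * c * g x ^ q + c ^ 2 := funext fun x => by ring
      rw [hfe]
      exact (h2.sub (hu1.const_mul (2 * c))).add (integrable_const _)
    have intgs : Integrable (fun x => (g x ^ q) ^ s) ν :=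
      hgi.congr (Filter.Eventually.of_forall fun x => (hgu x).symm)
    have e3 : ∫ x, (g x ^ q) ^ s ∂ν = m := by
      rw [integral_congr_ae (Filter.Eventually.of_forall fun x => hgu x), ← hm]
    -- k ≤ ub
    have hk_le_ub : k ≤ ub := by
      have hJ := lemJ (ν := ν) hs0 hs1.le hu hu0 hu1
      rw [e3, ← hub] at hJ
      have h := Real.rpow_le_rpow hm0 hJ hq0.le
      rw [hcancel _ hub0] at h
      rw [hk]; exact h
    have hD0 : 0 ≤ ub - k := sub_nonneg.2 hk_le_ub
    show (ub - k) ^ 2 ≤ (η ^ (2*q))⁻¹ * B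
    rcases le_or_gt (η * ub ^ s) (B ^ (s/2)) with hcase | hcase
    · -- Case 1 : large variance
      have h := Real.rpow_le_rpow (mul_nonneg hη0.le (Real.rpow_nonneg hub0 s)) hcase
        (by positivity : (0:ℝ) ≤ 2/s)
      rw [Real.mul_rpow hη0.le (Real.rpow_nonneg hub0 s), ← Real.rpow_mul hub0,
        ← Real.rpow_mul hB0, show s * (2/s) = (2:ℝ) by field_simp,
        show s/2 * (2/s) = (1:ℝ) by field_simp, Real.rpow_two, Real.rpow_one,
        show (2:ℝ)/s = 2*q by rw [hs, div_inv_eq_mul]] at h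
      -- h : η ^ (2*q) * ub ^ 2 ≤ B
      have h2' : (ub - k) ^ 2 ≤ ub ^ 2 := by nlinarith [hk0, hk_le_ub, hub0]
      have h3 := mul_le_mul_of_nonneg_left h hCpos.le
      rw [← mul_assoc, inv_mul_cancel₀ hηq.ne', one_mul] at h3
      linarith
    · -- Case 2 : small variance
      have hubpos : 0 < ub := by
        rcases eq_or_lt_of_le hub0 with h0 | h; swap
        · exact h
        exfalso
        rw [← h0, Real.zero_rpow hs0.ne', mul_zero] at hcase
        exact absurd hcase (not_lt.2 (Real.rpow_nonneg hB0 _))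
      have hpw2 : ∀ x, ub ^ s - (g x ^ q) ^ s ≤ ((g x ^ q - ub) ^ 2) ^ (s/2) := by
        intro x
        have hrw : ((g x ^ q - ub) ^ 2) ^ (s/2) = |g x ^ q - ub| ^ s := by
          rw [← sq_abs, ← Real.rpow_two, ← Real.rpow_mul (abs_nonneg _),
            show (2:ℝ) * (s/2) = s by ring]
        rw [hrw]
        rcases le_or_gt ub (g x ^ q) with h | h
        · have : ub ^ s ≤ (g x ^ q) ^ s := Real.rpow_le_rpow hub0 h hs0.le
          linarith [Real.rpow_nonneg (abs_nonneg (g x ^ q - ub)) s]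
        · have h1 := lemSub hs0 hs1.le (hu0 x) h.le
          rwa [abs_sub_comm, abs_of_nonneg (sub_nonneg.2 h.le)]
      have hIJ : ∫ x, ((g x ^ q - ub) ^ 2) ^ (s/2) ∂ν ≤ B ^ (s/2) := by
        have h := lemJ (ν := ν) (half_pos hs0) (by linarith : s/2 ≤ 1)
          ((hu.sub measurable_const).pow_const 2) (fun x => sq_nonneg _) (hsqint ub)
        change ∫ x, ((g x ^ q - ub) ^ 2) ^ (s/2) ∂ν ≤ (∫ x, (g x ^ q - ub) ^ 2 ∂ν) ^ (s/2) at h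
        rwa [← hB] at h
      have hsub : ub ^ s - m ≤ B ^ (s/2) := by
        have hmono : ∫ x, (ub ^ s - (g x ^ q) ^ s) ∂ν
            ≤ ∫ x, ((g x ^ q - ub) ^ 2) ^ (s/2) ∂ν :=
          integral_mono ((integrable_const (ub ^ s)).sub intgs)
            (intRpow ((hu.sub measurable_const).pow_const 2) (fun x => sq_nonneg _)
              (hsqint ub) (by positivity) (by linarith)) hpw2
        have e1 : ∫ x, (ub ^ s - (g x ^ q) ^ s) ∂ν = ub ^ s - m := by
          rw [integral_sub (integrable_const _) intgs, integral_const,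
            probReal_univ, one_smul, e3]
        rw [e1] at hmono
        exact hmono.trans hIJ
      have hm_gt : ((1 - s/4) * ub) ^ s < m := by
        have hmul : ((1 - s/4) * ub) ^ s = (1 - s/4) ^ s * ub ^ s :=
          Real.mul_rpow (by linarith) hub0
        rw [hη] at hcase
        rw [hmul]
        linarith [hsub, hcase]
      have hk_gt : (1 - s/4) * ub < k := by
        have hXnn : (0:ℝ) ≤ (1 - s/4) * ub := mul_nonneg (by linarith) hub0
        have h := Real.rpow_lt_rpow (Real.rpow_nonneg hXnn s) hm_gt hq0
        rw [hcancel _ hXnn, ← hk] at h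
        exact h
      have hk2 : ub / 2 ≤ k := by
        nlinarith [mul_le_mul_of_nonneg_right hs1.le hub0]
      have hD1 : ub - k ≤ s/4 * ub := by nlinarith [hk_gt]
      have hkpos : 0 < k := by linarith
      have hK : 0 < k ^ s := Real.rpow_pos_of_pos hkpos s
      have hks : k ^ s = m := by
        rw [hk, hs]; exact Real.rpow_rpow_inv hm0 hq0.ne'
      have hexpk : ∫ x, (g x ^ q - k) ^ 2 ∂ν = B + (ub - k) ^ 2 := by
        have e0 : ∫ x, (g x ^ q - k) ^ 2 ∂ν
            = (∫ x, (g x ^ q - ∫ y, g y ^ q ∂ν) ^ 2 ∂ν) + ((∫ x, g x ^ q ∂ν) - k) ^ 2 :=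
          expand hu.aestronglyMeasurable h2 k
        rw [← hub, ← hB] at e0
        exact e0
      have pwA' : ∀ x, (1 - s) * k ^ s + (s * k ^ s / k) * (g x ^ q)
          - (k ^ s / k ^ 2) * (g x ^ q - k) ^ 2 ≤ (g x ^ q) ^ s := by
        intro x
        have h := lemA hs0 hs1.le (div_nonneg (hu0 x) hkpos.le)
        rw [Real.div_rpow (hu0 x) hkpos.le] at h
        have h2' : (1 + s * (g x ^ q / k - 1) - (g x ^ q / k - 1) ^ 2) * k ^ s
            ≤ (g x ^ q) ^ s := by
          calc (1 + s * (g x ^ q / k - 1) - (g x ^ q / k - 1) ^ 2) * k ^ s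
              ≤ ((g x ^ q) ^ s / k ^ s) * k ^ s := mul_le_mul_of_nonneg_right h hK.le
            _ = (g x ^ q) ^ s := by field_simp
        have hid : (1 - s) * k ^ s + (s * k ^ s / k) * (g x ^ q)
            - (k ^ s / k ^ 2) * (g x ^ q - k) ^ 2
            = (1 + s * (g x ^ q / k - 1) - (g x ^ q / k - 1) ^ 2) * k ^ s := by
          field_simp
          ring
        rw [hid]; exact h2'
      have hQ : (1 - s) * k ^ s + (s * k ^ s / k) * ub
          - (k ^ s / k ^ 2) * (B + (ub - k) ^ 2) ≤ k ^ s := by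
        have hint : Integrable (fun x => (1 - s) * k ^ s + (s * k ^ s / k) * (g x ^ q)
            - (k ^ s / k ^ 2) * (g x ^ q - k) ^ 2) ν :=
          ((integrable_const _).add (hu1.const_mul _)).sub ((hsqint k).const_mul _)
        have hmono : ∫ x, ((1 - s) * k ^ s + (s * k ^ s / k) * (g x ^ q)
            - (k ^ s / k ^ 2) * (g x ^ q - k) ^ 2) ∂ν ≤ ∫ x, (g x ^ q) ^ s ∂ν :=
          integral_mono hint intgs pwA'
        have e2 : ∫ x, ((1 - s) * k ^ s + (s * k ^ s / k) * (g x ^ q)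
            - (k ^ s / k ^ 2) * (g x ^ q - k) ^ 2) ∂ν
            = (1 - s) * k ^ s + (s * k ^ s / k) * ub
              - (k ^ s / k ^ 2) * (B + (ub - k) ^ 2) := by
          have i1 : Integrable (fun x => (1 - s) * k ^ s + (s * k ^ s / k) * (g x ^ q)) ν :=
            (integrable_const _).add (hu1.const_mul _)
          have i2 : Integrable (fun x => (k ^ s / k ^ 2) * (g x ^ q - k) ^ 2) ν :=
            (hsqint k).const_mul _
          have i3 : Integrable (fun _ : α => (1 - s) * k ^ s) ν := integrable_const _
          have i4 : Integrable (fun x => (s * k ^ s / k) * (g x ^ q)) ν :=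
            hu1.const_mul _
          rw [integral_sub i1 i2, integral_add i3 i4, integral_const,
            probReal_univ, one_smul, integral_const_mul, integral_const_mul,
            hexpk, ← hub]
        rw [e2, e3, ← hks] at hmono
        exact hmono
      have hF3 : s * k * (ub - k) ≤ B + (ub - k) ^ 2 := by
        have h5 : (s * k ^ s / k) * ub - s * k ^ s
            ≤ (k ^ s / k ^ 2) * (B + (ub - k) ^ 2) := by linarith
        have h6 := mul_le_mul_of_nonneg_left h5
          (le_of_lt (div_pos (pow_pos hkpos 2) hK))
        have e4 : k ^ 2 / k ^ s * (k ^ s / k ^ 2 * (B + (ub - k) ^ 2))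
            = B + (ub - k) ^ 2 := by
          field_simp [hK.ne', hkpos.ne']
        have e5 : k ^ 2 / k ^ s * ((s * k ^ s / k) * ub - s * k ^ s)
            = s * k * ub - s * k ^ 2 := by
          field_simp [hK.ne', hkpos.ne']
        rw [e4, e5] at h6
        nlinarith [h6]
      have h7 : s * (ub/2) * (ub - k) ≤ s * k * (ub - k) :=
        mul_le_mul_of_nonneg_right (mul_le_mul_of_nonneg_left hk2 hs0.le) hD0
      have h8 : (ub - k) ^ 2 ≤ (s/4 * ub) * (ub - k) := by
        nlinarith [mul_le_mul_of_nonneg_right hD1 hD0]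
      have h9 : s/4 * ub * (ub - k) ≤ B := by nlinarith [hF3, h7, h8]
      have h10 : (ub - k) ^ 2 ≤ B := by nlinarith [h8, h9]
      nlinarith [h10, mul_nonneg (sub_nonneg.2 hC1) hB0]

/-- For `q > 1/2` there are constants `c₀, c₁ > 0`, depending only on `q`, such that the
mean square deviation of `g^q` from `((g)_E)^q` and from `(g^q)_E` are comparable. -/
theorem stmt_5 (q : ℝ) (hq : 1 / 2 < q) :
    ∃ c₀ c₁ : ℝ, 0 < c₀ ∧ 0 < c₁ ∧
      ∀ (n : ℕ) (E : Set (Fin n → ℝ)), MeasurableSet E →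
        0 < volume E → volume E < ⊤ →
        ∀ g : (Fin n → ℝ) → ℝ, Measurable g → (∀ x, 0 ≤ g x) →
          IntegrableOn (fun x => g x ^ (2 * q)) E →
          (⨍ x in E, |g x ^ q - (⨍ y in E, g y) ^ q| ^ 2) ≤
              c₀ * ⨍ x in E, |g x ^ q - ⨍ y in E, g y ^ q| ^ 2 ∧
            c₀ * (⨍ x in E, |g x ^ q - ⨍ y in E, g y ^ q| ^ 2) ≤
              c₁ * ⨍ x in E, |g x ^ q - (⨍ y in E, g y) ^ q| ^ 2 := by
  obtain ⟨C, hC1, hkey⟩ := key q hq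
  have hq0 : 0 < q := by linarith
  refine ⟨1 + C, 1 + C, by linarith, by linarith, ?_⟩
  intro n E hE hE0 hEtop g hg hg0 hgint
  set ν : Measure (Fin n → ℝ) := (volume E)⁻¹ • volume.restrict E with hν
  have hprob : IsProbabilityMeasure ν := by
    constructor
    rw [hν, Measure.smul_apply, Measure.restrict_apply_univ, smul_eq_mul,
      ENNReal.inv_mul_cancel hE0.ne' hEtop.ne]
  haveI := hprob
  have havg : ∀ f : (Fin n → ℝ) → ℝ, (⨍ x in E, f x) = ∫ x, f x ∂ν := by
    intro f
    rw [average_eq', hν, Measure.restrict_apply_univ]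
  have hgint' : Integrable (fun x => g x ^ (2 * q)) ν := by
    rw [hν]
    exact hgint.smul_measure (ENNReal.inv_ne_top.2 hE0.ne')
  have hu : Measurable fun x => g x ^ q :=
    (Real.continuous_rpow_const hq0.le).measurable.comp hg
  have h2 : Integrable (fun x => (g x ^ q) ^ 2) ν := by
    refine hgint'.congr (Filter.Eventually.of_forall fun x => ?_)
    show g x ^ (2 * q) = (g x ^ q) ^ 2
    rw [show (2:ℝ) * q = q + q by ring,
      Real.rpow_add' (hg0 x) (by positivity : q + q ≠ 0), sq]
  have hkey' := hkey (Fin n → ℝ) _ ν hprob g hg hg0 hgint'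
  have hexp : ∫ x, (g x ^ q - (∫ y, g y ∂ν) ^ q) ^ 2 ∂ν
      = (∫ x, (g x ^ q - ∫ y, g y ^ q ∂ν) ^ 2 ∂ν)
        + ((∫ x, g x ^ q ∂ν) - (∫ x, g x ∂ν) ^ q) ^ 2 :=
    expand hu.aestronglyMeasurable h2 _
  have hB0 : 0 ≤ ∫ x, (g x ^ q - ∫ y, g y ^ q ∂ν) ^ 2 ∂ν :=
    integral_nonneg fun x => sq_nonneg _
  have hD0 : 0 ≤ ((∫ x, g x ^ q ∂ν) - (∫ x, g x ∂ν) ^ q) ^ 2 := sq_nonneg _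
  simp only [havg, sq_abs]
  constructor
  · rw [hexp]
    nlinarith [hkey', hB0]
  · rw [hexp]
    nlinarith [hD0, hB0, hC1]
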